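/- The operator ρ_w annihilates all nontrivial shuffle products: if u and v are elementary tensors of positive weights p and q with p + q = w, then ρ_w(u ⧢ v) = 0. -/
import Mathlib


/- We model the weight-graded tensor algebra of a `ℚ`-vector space with basis `V`
as the free `ℚ`-module on words `List V`; elementary tensors are single words. -/

/-- Prepend a letter to every word (linear "a ⊗ -"). -/
noncomputable def consL {V : Type*} (a : V) (x : List V →₀ ℚ) : List V →₀ ℚ :=
  Finsupp.mapDomain (fun l => a :: l) x

/-- Append a letter to every word (linear "- ⊗ a"). -/
noncomputable def appR {V : Type*} (a : V) (x : List V →₀ ℚ) : List V →₀ ℚ :=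
  Finsupp.mapDomain (fun l => l ++ [a]) x

/-- The shuffle product of two elementary tensors (words). -/
noncomputable def shuffle {V : Type*} : List V → List V → (List V →₀ ℚ)
  | [], v => Finsupp.single v 1
  | a :: u, [] => Finsupp.single (a :: u) 1
  | a :: u, b :: v => consL a (shuffle u (b :: v)) + consL b (shuffle (a :: u) v)
  termination_by u v => u.length + v.length

/-- The Dynkin-type operator `ρ` on elementary tensors:
`ρ₁ = id` and `ρ_w(a₁⊗…⊗a_w) = ρ_{w-1}(a₁⊗…⊗a_{w-1}) ⊗ a_w − ρ_{w-1}(a₂⊗…⊗a_w) ⊗ a₁`. -/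
noncomputable def rho {V : Type*} : List V → (List V →₀ ℚ)
  | [] => 0
  | [a] => Finsupp.single [a] 1
  | a :: b :: l =>
      appR ((b :: l).getLast (List.cons_ne_nil _ _)) (rho (a :: (b :: l).dropLast))
        - appR a (rho (b :: l))
  termination_by l => l.length
  decreasing_by all_goals simp [List.length_dropLast]

/-- Linear extension of `ρ`. -/
noncomputable def rhoL {V : Type*} (x : List V →₀ ℚ) : List V →₀ ℚ :=
  x.sum fun l c => c • rho l

section Aux
variable {V : Type*}

lemma consL_add (a : V) (x y : List V →₀ ℚ) : consL a (x + y) = consL a x + consL a y :=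
  Finsupp.mapDomain_add

lemma appR_add (a : V) (x y : List V →₀ ℚ) : appR a (x + y) = appR a x + appR a y :=
  Finsupp.mapDomain_add

lemma appR_smul (a : V) (c : ℚ) (x : List V →₀ ℚ) : appR a (c • x) = c • appR a x :=
  Finsupp.mapDomain_smul _ _

lemma appR_zero (a : V) : appR a (0 : List V →₀ ℚ) = 0 := Finsupp.mapDomain_zero

lemma appR_single (a : V) (l : List V) (c : ℚ) :
    appR a (Finsupp.single l c) = Finsupp.single (l ++ [a]) c := Finsupp.mapDomain_single

lemma consL_single (a : V) (l : List V) (c : ℚ) :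
    consL a (Finsupp.single l c) = Finsupp.single (a :: l) c := Finsupp.mapDomain_single

lemma consL_appR (a b : V) (x : List V →₀ ℚ) : consL a (appR b x) = appR b (consL a x) := by
  unfold consL appR
  rw [← Finsupp.mapDomain_comp, ← Finsupp.mapDomain_comp]
  rfl

lemma shuffle_nil_left (v : List V) : shuffle [] v = Finsupp.single v 1 := by rw [shuffle]

lemma shuffle_nil_right (u : List V) : shuffle u [] = Finsupp.single u 1 := by
  cases u <;> rw [shuffle]

lemma shuffle_cons (a b : V) (u v : List V) :
    shuffle (a::u) (b::v) = consL a (shuffle u (b :: v)) + consL b (shuffle (a :: u) v) := by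
  rw [shuffle]

lemma shuffle_concat_aux : ∀ (n : ℕ) (u v : List V) (x y : V), u.length + v.length ≤ n →
    shuffle (u ++ [x]) (v ++ [y]) =
      appR x (shuffle u (v ++ [y])) + appR y (shuffle (u ++ [x]) v) := by
  intro n
  induction n with
  | zero =>
    intro u v x y h
    have hu : u = [] := by cases u <;> simp_all
    have hv : v = [] := by cases v <;> simp_all
    subst hu; subst hv
    simp only [List.nil_append]
    rw [shuffle_cons, shuffle_nil_left, shuffle_nil_right, consL_single, consL_single,
      appR_single, appR_single]
    simp only [List.singleton_append]
    abel
  | succ n ih =>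
    intro u v x y h
    match u, v with
    | [], [] =>
      simp only [List.nil_append]
      rw [shuffle_cons, shuffle_nil_left, shuffle_nil_right, consL_single, consL_single,
        appR_single, appR_single]
      simp only [List.singleton_append]
      abel
    | [], b :: v' =>
      have H := ih [] v' x y (by simp at h ⊢; omega)
      simp only [List.nil_append] at H
      simp only [List.nil_append, List.cons_append]
      rw [shuffle_cons, H, shuffle_cons x b [] v']
      rw [shuffle_nil_left, shuffle_nil_left, shuffle_nil_left]
      simp only [consL_add, appR_add, consL_appR, consL_single, appR_single,
        List.cons_append, List.append_assoc, List.singleton_append]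
      abel
    | a :: u', [] =>
      have H := ih u' [] x y (by simp at h ⊢; omega)
      simp only [List.nil_append] at H
      simp only [List.nil_append, List.cons_append]
      rw [shuffle_cons a y (u' ++ [x]) [], H, shuffle_cons a y u' []]
      rw [shuffle_nil_right, shuffle_nil_right, shuffle_nil_right]
      simp only [consL_add, appR_add, consL_appR, consL_single, appR_single,
        List.cons_append, List.append_assoc, List.singleton_append]
      abel
    | a :: u', b :: v' =>
      have H1 := ih u' (b :: v') x y (by simp at h ⊢; omega)
      simp only [List.cons_append] at H1
      have H2 := ih (a :: u') v' x y (by simp at h ⊢; omega)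
      simp only [List.cons_append] at H2
      simp only [List.cons_append]
      rw [shuffle_cons a b (u' ++ [x]) (v' ++ [y]), H1, H2,
        shuffle_cons a b u' (v' ++ [y]), shuffle_cons a b (u' ++ [x]) v']
      simp only [consL_add, appR_add, consL_appR]
      abel

lemma shuffle_concat (u v : List V) (x y : V) :
    shuffle (u ++ [x]) (v ++ [y]) =
      appR x (shuffle u (v ++ [y])) + appR y (shuffle (u ++ [x]) v) :=
  shuffle_concat_aux (u.length + v.length) u v x y le_rfl

noncomputable def Pw : List V → (List V →₀ ℚ)
  | [] => 0
  | a :: l => appR ((a :: l).getLast (List.cons_ne_nil _ _)) (rho (a :: l).dropLast)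

noncomputable def Qw : List V → (List V →₀ ℚ)
  | [] => 0
  | a :: l => appR a (rho l)

noncomputable def PL (x : List V →₀ ℚ) : List V →₀ ℚ := x.sum fun l c => c • Pw l
noncomputable def QL (x : List V →₀ ℚ) : List V →₀ ℚ := x.sum fun l c => c • Qw l

lemma rho_eq_sub (a b : V) (l : List V) :
    rho (a :: b :: l) = Pw (a :: b :: l) - Qw (a :: b :: l) := by
  rw [rho]
  simp only [Pw, Qw, List.getLast_cons_cons, List.dropLast_cons₂]

lemma Pw_concat (z : V) (l : List V) : Pw (l ++ [z]) = appR z (rho l) := by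
  cases l with
  | nil => simp [Pw, rho, appR_zero]
  | cons hd tl =>
    show Pw (hd :: (tl ++ [z])) = _
    simp only [Pw]
    have h1 : (hd :: (tl ++ [z])).getLast (List.cons_ne_nil _ _) = z := by
      simp [List.getLast_append]
    have h2 : (hd :: (tl ++ [z])).dropLast = hd :: tl := by
      rw [show hd :: (tl ++ [z]) = (hd :: tl) ++ [z] from rfl]
      exact List.dropLast_concat
    rw [h1, h2]

lemma rhoL_add (x y : List V →₀ ℚ) : rhoL (x + y) = rhoL x + rhoL y :=
  Finsupp.sum_add_index' (fun _ => by simp) (fun _ c d => add_smul c d _)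

lemma PL_add (x y : List V →₀ ℚ) : PL (x + y) = PL x + PL y :=
  Finsupp.sum_add_index' (fun _ => by simp) (fun _ c d => add_smul c d _)

lemma QL_add (x y : List V →₀ ℚ) : QL (x + y) = QL x + QL y :=
  Finsupp.sum_add_index' (fun _ => by simp) (fun _ c d => add_smul c d _)

lemma rhoL_single (l : List V) : rhoL (Finsupp.single l 1) = rho l := by
  rw [rhoL, Finsupp.sum_single_index (by simp), one_smul]

lemma appR_finsuppSum (z : V) (x : List V →₀ ℚ) (f : List V → ℚ → (List V →₀ ℚ)) :
    appR z (x.sum f) = x.sum fun l c => appR z (f l c) :=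
  map_sum (Finsupp.mapDomain.addMonoidHom _) _ _

lemma QL_consL (a : V) (x : List V →₀ ℚ) : QL (consL a x) = appR a (rhoL x) := by
  unfold QL consL
  rw [Finsupp.sum_mapDomain_index (fun _ => by simp) (fun _ c d => add_smul c d _)]
  rw [rhoL, appR_finsuppSum]
  refine Finsupp.sum_congr fun l _ => ?_
  rw [appR_smul]
  simp only [Qw]

lemma PL_appR (z : V) (x : List V →₀ ℚ) : PL (appR z x) = appR z (rhoL x) := by
  unfold PL appR
  rw [Finsupp.sum_mapDomain_index (fun _ => by simp) (fun _ c d => add_smul c d _)]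
  rw [rhoL]
  rw [show (Finsupp.mapDomain (fun l => l ++ [z]) : (List V →₀ ℚ) → (List V →₀ ℚ)) = appR z
    from rfl]
  rw [appR_finsuppSum]
  refine Finsupp.sum_congr fun l _ => ?_
  rw [appR_smul, Pw_concat]

lemma rhoL_eq_PL_sub_QL (x : List V →₀ ℚ) (hx : ∀ l ∈ x.support, 2 ≤ l.length) :
    rhoL x = PL x - QL x := by
  rw [rhoL, PL, QL, Finsupp.sum, Finsupp.sum, Finsupp.sum, ← Finset.sum_sub_distrib]
  refine Finset.sum_congr rfl fun l hl => ?_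
  have h2 := hx l hl
  cases l with
  | nil => simp at h2
  | cons a t =>
    cases t with
    | nil => simp at h2
    | cons b l' => rw [rho_eq_sub, smul_sub]

lemma shuffle_support_length :
    ∀ (n : ℕ) (u v : List V), u.length + v.length ≤ n →
      ∀ l ∈ (shuffle u v).support, l.length = u.length + v.length := by
  intro n
  induction n with
  | zero =>
    intro u v h l hl
    have hu : u = [] := by cases u <;> simp_all
    have hv : v = [] := by cases v <;> simp_all
    subst hu; subst hv
    rw [shuffle_nil_left] at hl
    rw [Finsupp.support_single_ne_zero _ one_ne_zero] at hl
    simp at hl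
    simp [hl]
  | succ n ih =>
    intro u v h l hl
    match u, v with
    | [], v =>
      rw [shuffle_nil_left, Finsupp.support_single_ne_zero _ one_ne_zero] at hl
      simp at hl
      simp [hl]
    | a :: u', [] =>
      rw [shuffle_nil_right, Finsupp.support_single_ne_zero _ one_ne_zero] at hl
      simp at hl
      simp [hl]
    | a :: u', b :: v' =>
      classical
      rw [shuffle_cons] at hl
      have hl' := Finsupp.support_add hl
      rw [Finset.mem_union] at hl'
      rcases hl' with hl' | hl'
      · have := Finsupp.mapDomain_support hl'
        rw [Finset.mem_image] at this
        obtain ⟨l', hl'', rfl⟩ := this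
        have := ih u' (b :: v') (by simp at h ⊢; omega) l' hl''
        simp [this]
        omega
      · have := Finsupp.mapDomain_support hl'
        rw [Finset.mem_image] at this
        obtain ⟨l', hl'', rfl⟩ := this
        have := ih (a :: u') v' (by simp at h ⊢; omega) l' hl''
        simp [this]
        omega

lemma rhoL_shuffle_key (a b : V) (u v : List V) :
    rhoL (shuffle (a :: u) (b :: v)) =
      appR ((a :: u).getLast (List.cons_ne_nil _ _)) (rhoL (shuffle (a :: u).dropLast (b :: v)))
        + appR ((b :: v).getLast (List.cons_ne_nil _ _)) (rhoL (shuffle (a :: u) (b :: v).dropLast))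
        - appR a (rhoL (shuffle u (b :: v))) - appR b (rhoL (shuffle (a :: u) v)) := by
  have hsupp : ∀ l ∈ (shuffle (a :: u) (b :: v)).support, 2 ≤ l.length := by
    intro l hl
    have := shuffle_support_length _ (a :: u) (b :: v) le_rfl l hl
    simp at this
    omega
  rw [rhoL_eq_PL_sub_QL _ hsupp]
  have hQ : QL (shuffle (a :: u) (b :: v)) =
      appR a (rhoL (shuffle u (b :: v))) + appR b (rhoL (shuffle (a :: u) v)) := by
    rw [shuffle_cons, QL_add, QL_consL, QL_consL]
  have hP : PL (shuffle (a :: u) (b :: v)) =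
      appR ((a :: u).getLast (List.cons_ne_nil _ _)) (rhoL (shuffle (a :: u).dropLast (b :: v)))
        + appR ((b :: v).getLast (List.cons_ne_nil _ _))
            (rhoL (shuffle (a :: u) (b :: v).dropLast)) := by
    conv_lhs => rw [← List.dropLast_append_getLast (List.cons_ne_nil a u),
      ← List.dropLast_append_getLast (List.cons_ne_nil b v)]
    rw [shuffle_concat, PL_add, PL_appR, PL_appR,
      List.dropLast_append_getLast (List.cons_ne_nil a u),
      List.dropLast_append_getLast (List.cons_ne_nil b v)]
  rw [hP, hQ]
  abel

lemma main_aux : ∀ (n : ℕ) (u v : List V), u.length + v.length ≤ n → u ≠ [] → v ≠ [] →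
    rhoL (shuffle u v) = 0 := by
  intro n
  induction n with
  | zero =>
    intro u v h hu hv
    cases u <;> simp_all
  | succ n ih =>
    intro u v h hu hv
    match u, v with
    | a :: u, b :: v =>
      rw [rhoL_shuffle_key]
      have h1 : appR ((a :: u).getLast (List.cons_ne_nil _ _))
            (rhoL (shuffle (a :: u).dropLast (b :: v)))
          = appR a (rhoL (shuffle u (b :: v))) := by
        cases u with
        | nil => simp
        | cons c u'' =>
          simp only [List.dropLast_cons₂]
          rw [ih (a :: (c :: u'').dropLast) (b :: v)
              (by simp at h ⊢; omega) (by simp) (by simp),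
            ih (c :: u'') (b :: v) (by simp at h ⊢; omega) (by simp) (by simp)]
          rw [appR_zero, appR_zero]
      have h2 : appR ((b :: v).getLast (List.cons_ne_nil _ _))
            (rhoL (shuffle (a :: u) (b :: v).dropLast))
          = appR b (rhoL (shuffle (a :: u) v)) := by
        cases v with
        | nil => simp
        | cons c v'' =>
          simp only [List.dropLast_cons₂]
          rw [ih (a :: u) (b :: (c :: v'').dropLast)
              (by simp at h ⊢; omega) (by simp) (by simp),
            ih (a :: u) (c :: v'') (by simp at h ⊢; omega) (by simp) (by simp)]
          rw [appR_zero, appR_zero]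
      rw [h1, h2]
      abel

end Aux

/-- `ρ_w` annihilates all nontrivial shuffle products: if `u`, `v` are elementary tensors
of positive weights, then `ρ(u ⧢ v) = 0`. -/
theorem stmt_5 (V : Type*) (u v : List V) (hu : u ≠ []) (hv : v ≠ []) :
    rhoL (shuffle u v) = 0 :=
  main_aux (u.length + v.length) u v le_rfl hu hv
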